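/- arXiv:math/0612182 — 6 statements merged into one kernel-verified Lean document; each statement's English description precedes it below -/
import Mathlib

section
/- The twisted diagonal action of SL(2,ℂ) is transitive on {([z],[w]) ∈ ℙ¹ × ℙ¹ : z₁w₁ − z₂w₂ ≠ 0}: for all nonzero vectors z = (z₁,z₂), w = (w₁,w₂) ∈ ℂ² with z₁w₁ − z₂w₂ ≠ 0 there exist g ∈ SL(2,ℂ) and nonzero scalars λ, μ ∈ ℂ such that g·(1,0) = λ·z and (overline{σ(g)})·(1,0) = μ·w. Hence the SL(2,ℂ)-orbit of the point ([1:0],[1:0]) equals {([z₁:z₂],[w₁:w₂]) ∈ ℙ¹ × ℙ¹ : z₁w₁ − z₂w₂ ≠ 0}. -/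
open Matrix Complex

noncomputable section

abbrev M2 : Type := Matrix (Fin 2) (Fin 2) ℂ

/-- The diagonal matrix `diag(1,-1)`. -/
def I11 : M2 := !![1, 0; 0, -1]

/-- The conjugation `σ(g) = I₁₁ ⬝ ᵗ(ḡ)⁻¹ ⬝ I₁₁`. -/
def sigmaC (g : M2) : M2 := I11 * ((g.map (starRingEnd ℂ))ᵀ)⁻¹ * I11

/-- `overline{σ(g)}`, the matrix acting on the second factor. -/
def tw (g : M2) : M2 := (sigmaC g).map (starRingEnd ℂ)

/-- The predicate `g ∈ SU(1,1)`. -/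
def SU11 (g : M2) : Prop := g.det = 1 ∧ (g.map (starRingEnd ℂ))ᵀ * I11 * g = I11

abbrev P1 : Type := Projectivization ℂ (Fin 2 → ℂ)

lemma fstNe (a b : ℂ) (ha : a ≠ 0) : ![a, b] ≠ 0 := by
  intro h
  exact ha (by simpa using congrFun h 0)

lemma oneNe (b : ℂ) : ![1, b] ≠ 0 := fstNe 1 b one_ne_zero

/-- The open `SL(2,ℂ)`-orbit `{ z₁w₁ - z₂w₂ ≠ 0 }` in `ℙ¹ × ℙ¹`. -/
def Omega : Set (P1 × P1) :=
  {p | ∃ (z w : Fin 2 → ℂ) (hz : z ≠ 0) (hw : w ≠ 0),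
    p = (Projectivization.mk ℂ z hz, Projectivization.mk ℂ w hw) ∧
    z 0 * w 0 - z 1 * w 1 ≠ 0}

/-- The domain `W ⊂ ℙ¹ × ℙ¹`. -/
def W : Set (P1 × P1) :=
  {p | ∃ (z w : Fin 2 → ℂ) (hz : z ≠ 0) (hw : w ≠ 0),
    p = (Projectivization.mk ℂ z hz, Projectivization.mk ℂ w hw) ∧
    ‖z 1‖ < ‖z 0‖ ∧ z 0 * w 0 - z 1 * w 1 ≠ 0}

lemma inv2 (a b c d : ℂ) (h : a * d - b * c = 1) :
    (!![a, b; c, d])⁻¹ = !![d, -b; -c, a] := by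
  apply Matrix.inv_eq_right_inv
  ext i j
  fin_cases i <;> fin_cases j <;>
    simp [Matrix.mul_apply, Fin.sum_univ_two, Matrix.one_apply] <;>
    (first | linear_combination h | ring)

lemma tw_eq (a b c d : ℂ) (h : a * d - b * c = 1) :
    tw !![a, b; c, d] = !![d, c; b, a] := by
  have h1 : ((!![a, b; c, d]).map (starRingEnd ℂ))ᵀ =
      !![(starRingEnd ℂ) a, (starRingEnd ℂ) c; (starRingEnd ℂ) b, (starRingEnd ℂ) d] := by
    ext i j; fin_cases i <;> fin_cases j <;> simp
  have hstar : (starRingEnd ℂ) a * (starRingEnd ℂ) d -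
      (starRingEnd ℂ) c * (starRingEnd ℂ) b = 1 := by
    have h2 := congrArg (starRingEnd ℂ) h
    simp only [map_sub, _root_.map_mul, _root_.map_one] at h2
    linear_combination h2
  have h3 := inv2 _ _ _ _ hstar
  unfold tw sigmaC
  rw [h1, h3]
  ext i j
  fin_cases i <;> fin_cases j <;>
    simp [I11, Matrix.mul_apply, Fin.sum_univ_two]

lemma mulVec2 (a b c d : ℂ) : (!![a, b; c, d]).mulVec ![1, 0] = ![a, c] := by
  ext i; fin_cases i <;> simp [Matrix.mulVec, dotProduct, Fin.sum_univ_two]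

/-- The twisted diagonal action of `SL(2,ℂ)` is transitive on
`{([z],[w]) : z₁w₁ - z₂w₂ ≠ 0}`; hence the orbit of `([1:0],[1:0])` is that set. -/
theorem twisted_action_transitive :
    (∀ z w : Fin 2 → ℂ, z ≠ 0 → w ≠ 0 → z 0 * w 0 - z 1 * w 1 ≠ 0 →
      ∃ g : M2, g.det = 1 ∧ ∃ lam mu : ℂ, lam ≠ 0 ∧ mu ≠ 0 ∧
        g.mulVec ![1, 0] = lam • z ∧ (tw g).mulVec ![1, 0] = mu • w) ∧
    {p : P1 × P1 | ∃ g : M2, g.det = 1 ∧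
        ∃ (hz : g.mulVec ![1, 0] ≠ 0) (hw : (tw g).mulVec ![1, 0] ≠ 0),
          p = (Projectivization.mk ℂ (g.mulVec ![1, 0]) hz,
               Projectivization.mk ℂ ((tw g).mulVec ![1, 0]) hw)} = Omega := by
  have part1 : ∀ z w : Fin 2 → ℂ, z ≠ 0 → w ≠ 0 → z 0 * w 0 - z 1 * w 1 ≠ 0 →
      ∃ g : M2, g.det = 1 ∧ ∃ lam mu : ℂ, lam ≠ 0 ∧ mu ≠ 0 ∧
        g.mulVec ![1, 0] = lam • z ∧ (tw g).mulVec ![1, 0] = mu • w := by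
    intro z w hz hw hD
    set D : ℂ := z 0 * w 0 - z 1 * w 1 with hDdef
    set t : ℂ := D⁻¹ with htdef
    have ht : t ≠ 0 := inv_ne_zero hD
    have hdet1 : z 0 * (w 0 * t) - w 1 * t * z 1 = 1 := by
      field_simp [htdef, hDdef]
      have h' : t * D = 1 := by rw [htdef]; exact inv_mul_cancel₀ hD
      rw [hDdef] at h'
      linear_combination h'
    refine ⟨!![z 0, w 1 * t; z 1, w 0 * t], ?_, 1, t, one_ne_zero, ht, ?_, ?_⟩
    · rw [Matrix.det_fin_two_of]; exact hdet1
    · rw [mulVec2]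
      ext i; fin_cases i <;> simp
    · rw [tw_eq _ _ _ _ hdet1, mulVec2]
      ext i; fin_cases i <;> simp <;> ring
  refine ⟨part1, ?_⟩
  ext p
  constructor
  · rintro ⟨g, hg, hz, hw, rfl⟩
    have hgeta : g = !![g 0 0, g 0 1; g 1 0, g 1 1] := Matrix.etaExpand_eq g |>.symm
    have hdet : g 0 0 * g 1 1 - g 0 1 * g 1 0 = 1 := by
      rw [Matrix.det_fin_two] at hg; exact hg
    have htw : tw g = !![g 1 1, g 1 0; g 0 1, g 0 0] := by
      conv_lhs => rw [hgeta]
      exact tw_eq _ _ _ _ hdet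
    have hz2 : g.mulVec ![1, 0] = ![g 0 0, g 1 0] := by
      conv_lhs => rw [hgeta]
      exact mulVec2 _ _ _ _
    have hw2 : (tw g).mulVec ![1, 0] = ![g 1 1, g 0 1] := by
      rw [htw]; exact mulVec2 _ _ _ _
    refine ⟨g.mulVec ![1, 0], (tw g).mulVec ![1, 0], hz, hw, rfl, ?_⟩
    rw [hz2, hw2]
    simp only [Matrix.cons_val_zero, Matrix.cons_val_one, Matrix.head_cons]
    intro h0
    exact one_ne_zero (by linear_combination h0 - hdet : (1:ℂ) = 0)
  · rintro ⟨z, w, hz, hw, rfl, hD⟩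
    obtain ⟨g, hg, lam, mu, hlam, hmu, hgz, hgw⟩ := part1 z w hz hw hD
    have hz' : g.mulVec ![1, 0] ≠ 0 := by
      rw [hgz]; exact smul_ne_zero hlam hz
    have hw' : (tw g).mulVec ![1, 0] ≠ 0 := by
      rw [hgw]; exact smul_ne_zero hmu hw
    refine ⟨g, hg, hz', hw', ?_⟩
    have e1 : Projectivization.mk ℂ (g.mulVec ![1, 0]) hz' = Projectivization.mk ℂ z hz := by
      rw [Projectivization.mk_eq_mk_iff]
      exact ⟨Units.mk0 lam hlam, by simpa [Units.smul_def] using hgz.symm⟩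
    have e2 : Projectivization.mk ℂ ((tw g).mulVec ![1, 0]) hw' = Projectivization.mk ℂ w hw := by
      rw [Projectivization.mk_eq_mk_iff]
      exact ⟨Units.mk0 mu hmu, by simpa [Units.smul_def] using hgw.symm⟩
    rw [e1, e2]

end
end

section
/- The SU(1,1)-orbit of the point w₁ = ([1:0],[1:i]) ∈ ℙ¹ × ℙ¹ under the twisted diagonal action is the Levi-flat set {([1:ζ],[1:ω]) : ζ, ω ∈ ℂ, |ζ| < 1, |ω| = 1}: for every g ∈ SU(1,1) there exist ζ with |ζ| < 1 and ω with |ω| = 1 such that g·w₁ = ([1:ζ],[1:ω]), and conversely every such pair (ζ, ω) arises from some g ∈ SU(1,1). -/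
open Matrix Complex

noncomputable section

lemma I11_mul_I11 : I11 * I11 = 1 := by
  ext i j
  fin_cases i <;> fin_cases j <;> simp [I11, Matrix.mul_apply, Fin.sum_univ_two, Matrix.one_apply]

lemma tw_eq_conj (g : M2) (hg : SU11 g) : tw g = g.map (starRingEnd ℂ) := by
  have hinv : ((g.map (starRingEnd ℂ))ᵀ)⁻¹ = I11 * g * I11 := by
    apply Matrix.inv_eq_right_inv
    calc (g.map (starRingEnd ℂ))ᵀ * (I11 * g * I11)
        = ((g.map (starRingEnd ℂ))ᵀ * I11 * g) * I11 := by
          rw [Matrix.mul_assoc, Matrix.mul_assoc, Matrix.mul_assoc]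
      _ = I11 * I11 := by rw [hg.2]
      _ = 1 := I11_mul_I11
  have hs : sigmaC g = g := by
    rw [sigmaC, hinv]
    calc I11 * (I11 * g * I11) * I11 = (I11 * I11) * g * (I11 * I11) := by
          simp only [Matrix.mul_assoc]
      _ = g := by rw [I11_mul_I11, Matrix.one_mul, Matrix.mul_one]
  rw [tw, hs]

lemma mk_pair (p q : ℂ) (hp : p ≠ 0) (h : ![p,q] ≠ 0) :
    Projectivization.mk ℂ ![p, q] h = Projectivization.mk ℂ ![1, q/p] (oneNe _) := by
  rw [Projectivization.mk_eq_mk_iff]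
  refine ⟨Units.mk0 p hp, ?_⟩
  funext i
  fin_cases i
  · simp
  · simp
    field_simp

lemma mulVec10 (g : M2) : g.mulVec ![1, 0] = ![g 0 0, g 1 0] := by
  funext i; fin_cases i <;> simp [Matrix.mulVec, dotProduct, Fin.sum_univ_two]

lemma mulVec1I (g : M2) : (g.map (starRingEnd ℂ)).mulVec ![1, Complex.I] =
    ![starRingEnd ℂ (g 0 0) + starRingEnd ℂ (g 0 1) * Complex.I,
      starRingEnd ℂ (g 1 0) + starRingEnd ℂ (g 1 1) * Complex.I] := by
  funext i; fin_cases i <;> simp [Matrix.mulVec, dotProduct, Fin.sum_univ_two]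

lemma mk_congr (v w : Fin 2 → ℂ) (h : v = w) (hv : v ≠ 0) :
    Projectivization.mk ℂ v hv = Projectivization.mk ℂ w (h ▸ hv) := by subst h; rfl

lemma su11_of (a b : ℂ) (key : a * starRingEnd ℂ a - b * starRingEnd ℂ b = 1) :
    SU11 !![a, b; starRingEnd ℂ b, starRingEnd ℂ a] := by
  constructor
  · rw [Matrix.det_fin_two_of]
    linear_combination key
  · ext i j
    fin_cases i <;> fin_cases j <;>
        simp [Matrix.mul_apply, Fin.sum_univ_two, I11, Matrix.map_apply]
    · linear_combination key
    · ring
    · ring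
    · linear_combination -key

/-- The `SU(1,1)`-orbit of `w₁ = ([1:0],[1:i])` is the Levi-flat set
`{([1:ζ],[1:ω]) : |ζ| < 1, |ω| = 1}`. -/
theorem orbit_of_w1 :
    (∀ g : M2, SU11 g →
      ∀ (hz : g.mulVec ![1, 0] ≠ 0) (hw : (tw g).mulVec ![1, Complex.I] ≠ 0),
        ∃ ζ ω : ℂ, ‖ζ‖ < 1 ∧ ‖ω‖ = 1 ∧
          Projectivization.mk ℂ (g.mulVec ![1, 0]) hz
            = Projectivization.mk ℂ ![1, ζ] (oneNe ζ) ∧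
          Projectivization.mk ℂ ((tw g).mulVec ![1, Complex.I]) hw
            = Projectivization.mk ℂ ![1, ω] (oneNe ω)) ∧
    (∀ ζ ω : ℂ, ‖ζ‖ < 1 → ‖ω‖ = 1 →
      ∃ g : M2, SU11 g ∧
        ∃ (hz : g.mulVec ![1, 0] ≠ 0) (hw : (tw g).mulVec ![1, Complex.I] ≠ 0),
          Projectivization.mk ℂ (g.mulVec ![1, 0]) hz
            = Projectivization.mk ℂ ![1, ζ] (oneNe ζ) ∧
          Projectivization.mk ℂ ((tw g).mulVec ![1, Complex.I]) hw
            = Projectivization.mk ℂ ![1, ω] (oneNe ω)) := by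
  constructor
  · intro g hg hz hw
    have h00 := congrFun (congrFun hg.2 0) 0
    have h01 := congrFun (congrFun hg.2 0) 1
    have h10 := congrFun (congrFun hg.2 1) 0
    have h11 := congrFun (congrFun hg.2 1) 1
    simp [Matrix.mul_apply, Fin.sum_univ_two, I11, Matrix.map_apply] at h00 h01 h10 h11
    set a := g 0 0 with ha; set b := g 0 1 with hb; set c := g 1 0 with hc; set d := g 1 1 with hd
    -- |a|^2 = 1 + |c|^2
    have hns : Complex.normSq a = 1 + Complex.normSq c := by
      have : ((Complex.normSq a : ℂ)) = ((1 + Complex.normSq c : ℝ) : ℂ) := by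
        push_cast
        rw [← Complex.mul_conj, ← Complex.mul_conj]
        linear_combination h00
      exact_mod_cast this
    have hane : a ≠ 0 := by
      intro h
      rw [h] at hns
      simp at hns
      nlinarith [Complex.normSq_nonneg c]
    have habs : ‖c‖ < ‖a‖ := by
      have := Complex.sq_norm a
      have := Complex.sq_norm c
      nlinarith [norm_nonneg a, norm_nonneg c]
    -- the second vector
    have hveq : (tw g).mulVec ![1, Complex.I] =
        ![starRingEnd ℂ a + starRingEnd ℂ b * Complex.I,
          starRingEnd ℂ c + starRingEnd ℂ d * Complex.I] := by
      rw [tw_eq_conj g hg, mulVec1I]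
    set p := starRingEnd ℂ a + starRingEnd ℂ b * Complex.I with hp
    set q := starRingEnd ℂ c + starRingEnd ℂ d * Complex.I with hq
    have hpq : p * starRingEnd ℂ p = q * starRingEnd ℂ q := by
      simp only [hp, hq, map_add, _root_.map_mul, Complex.conj_conj, Complex.conj_I]
      linear_combination h00 + h11 + Complex.I * h10 - Complex.I * h01 + (-((starRingEnd ℂ) b * b) + d * (starRingEnd ℂ) d) * Complex.I_sq
    have hpqns : Complex.normSq p = Complex.normSq q := by
      have : ((Complex.normSq p : ℂ)) = ((Complex.normSq q : ℝ) : ℂ) := by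
        rw [← Complex.mul_conj, ← Complex.mul_conj]; exact hpq
      exact_mod_cast this
    have hpne : p ≠ 0 := by
      intro h
      rw [h] at hpqns
      simp at hpqns
      have hq0 : q = 0 := by
        rwa [eq_comm, Complex.normSq_eq_zero] at hpqns
      apply hw
      rw [hveq]
      funext i; fin_cases i <;> simp [h, hq0]
    have habsq : ‖p‖ = ‖q‖ := by
      rw [Complex.norm_def, Complex.norm_def, hpqns]
    refine ⟨c / a, q / p, ?_, ?_, ?_, ?_⟩
    · rw [norm_div, div_lt_one (norm_pos_iff.2 hane)]
      exact habs
    · rw [norm_div, ← habsq, div_self (by simpa using hpne)]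
    · rw [mk_congr _ _ (mulVec10 g) hz]
      exact mk_pair a c hane _
    · rw [mk_congr _ _ hveq hw]
      exact mk_pair p q hpne _
  · intro ζ ω hζ hω
    have hω2 : ω * starRingEnd ℂ ω = 1 := by
      rw [Complex.mul_conj]
      norm_cast
      rw [← Complex.sq_norm, hω]; norm_num
    have hden : (1 : ℂ) - ω * ζ ≠ 0 := by
      intro h
      have h1 : ω * ζ = 1 := by linear_combination -h
      have h2 : ‖ω * ζ‖ = ‖(1:ℂ)‖ := by rw [h1]
      rw [norm_mul, hω, one_mul] at h2
      simp at h2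
      linarith
    obtain ⟨lam, hlamdef⟩ : ∃ l : ℂ, l = (ω - starRingEnd ℂ ζ) / (Complex.I * (1 - ω * ζ)) :=
      ⟨_, rfl⟩
    have hIden : Complex.I * (1 - ω * ζ) ≠ 0 := mul_ne_zero Complex.I_ne_zero hden
    have hlam : lam * (Complex.I * (1 - ω * ζ)) = ω - starRingEnd ℂ ζ := by
      rw [hlamdef, div_mul_cancel₀ _ hIden]
    have hlamabs : ‖lam‖ = 1 := by
      have hfac : (1 : ℂ) - ω * ζ = ω * (starRingEnd ℂ ω - ζ) := by
        rw [mul_sub, hω2]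
      have h2 : ‖starRingEnd ℂ ω - ζ‖ = ‖ω - starRingEnd ℂ ζ‖ := by
        rw [← Complex.norm_conj (starRingEnd ℂ ω - ζ)]
        congr 1
        simp [map_sub]
      have h1 : ‖ω - starRingEnd ℂ ζ‖ = ‖1 - ω * ζ‖ := by
        rw [hfac, norm_mul, hω, one_mul, h2]
      rw [hlamdef, norm_div, norm_mul, Complex.norm_I, one_mul, h1,
        div_self (norm_ne_zero_iff.2 hden)]
    obtain ⟨u, hu⟩ := IsAlgClosed.exists_pow_nat_eq lam (n := 2) (by norm_num)
    have huabs : ‖u‖ = 1 := by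
      have h1 : ‖u‖ ^ 2 = 1 := by rw [← norm_pow, hu, hlamabs]
      nlinarith [norm_nonneg u]
    have hune : u ≠ 0 := by
      intro h; rw [h] at huabs; simp at huabs
    obtain ⟨r, hrdef⟩ : ∃ r : ℝ, r = Real.sqrt (1 - ‖ζ‖ ^ 2) := ⟨_, rfl⟩
    have hr2 : r ^ 2 = 1 - ‖ζ‖ ^ 2 := by
      rw [hrdef]; exact Real.sq_sqrt (by nlinarith [norm_nonneg ζ])
    have hrpos : 0 < r := by
      rw [hrdef]; exact Real.sqrt_pos.2 (by nlinarith [norm_nonneg ζ])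
    obtain ⟨a, hadef⟩ : ∃ a : ℂ, a = u * ((r⁻¹ : ℝ) : ℂ) := ⟨_, rfl⟩
    obtain ⟨b, hbdef⟩ : ∃ b : ℂ, b = starRingEnd ℂ ζ * starRingEnd ℂ a := ⟨_, rfl⟩
    have hrne : ((r⁻¹ : ℝ) : ℂ) ≠ 0 := ofReal_ne_zero.2 (inv_ne_zero hrpos.ne')
    have hane : a ≠ 0 := by rw [hadef]; exact mul_ne_zero hune hrne
    have hnsa : Complex.normSq a = (r ^ 2)⁻¹ := by
      rw [hadef, Complex.normSq_mul, Complex.normSq_ofReal, ← Complex.sq_norm u, huabs]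
      ring
    have key : a * starRingEnd ℂ a - b * starRingEnd ℂ b = 1 := by
      have h1 : Complex.normSq b = Complex.normSq ζ * Complex.normSq a := by
        rw [hbdef, Complex.normSq_mul, Complex.normSq_conj, Complex.normSq_conj]
      have h2 : Complex.normSq a - Complex.normSq b = 1 := by
        rw [h1, hnsa, ← Complex.sq_norm ζ]
        field_simp
        nlinarith
      rw [Complex.mul_conj, Complex.mul_conj]
      norm_cast
    set g : M2 := !![a, b; starRingEnd ℂ b, starRingEnd ℂ a] with hgdef
    have hsu : SU11 g := su11_of a b key
    -- entry values
    have hg00 : g 0 0 = a := rfl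
    have hg01 : g 0 1 = b := rfl
    have hg10 : g 1 0 = starRingEnd ℂ b := rfl
    have hg11 : g 1 1 = starRingEnd ℂ a := rfl
    -- first vector
    have hcb : starRingEnd ℂ b = ζ * a := by
      rw [hbdef, _root_.map_mul, Complex.conj_conj, Complex.conj_conj]
    have hv1 : g.mulVec ![1, 0] = ![a, ζ * a] := by
      rw [mulVec10, hg00, hg10, hcb]
    have hz : g.mulVec ![1, 0] ≠ 0 := by rw [hv1]; exact fstNe _ _ hane
    -- second vector
    obtain ⟨p, hpdef⟩ : ∃ p : ℂ, p = starRingEnd ℂ a + starRingEnd ℂ b * Complex.I := ⟨_, rfl⟩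
    obtain ⟨q, hqdef⟩ : ∃ q : ℂ, q = b + a * Complex.I := ⟨_, rfl⟩
    have hv2 : (tw g).mulVec ![1, Complex.I] = ![p, q] := by
      rw [tw_eq_conj g hsu, mulVec1I, hg00, hg01, hg10, hg11, hpdef, hqdef,
        Complex.conj_conj, Complex.conj_conj]
    have hca : starRingEnd ℂ a = starRingEnd ℂ u * ((r⁻¹ : ℝ) : ℂ) := by
      rw [hadef, _root_.map_mul, Complex.conj_ofReal]
    have hcune : starRingEnd ℂ u + ζ * u * Complex.I ≠ 0 := by
      intro h
      have h1 : starRingEnd ℂ u = -(ζ * u * Complex.I) := by linear_combination h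
      have h2 : ‖starRingEnd ℂ u‖ = ‖-(ζ * u * Complex.I)‖ := by rw [h1]
      rw [Complex.norm_conj, huabs] at h2
      simp [Complex.norm_I, huabs] at h2
      linarith
    have hpeq : p = ((r⁻¹ : ℝ) : ℂ) * (starRingEnd ℂ u + ζ * u * Complex.I) := by
      rw [hpdef, hca, hcb, hadef]; ring
    have hpne : p ≠ 0 := by rw [hpeq]; exact mul_ne_zero hrne hcune
    -- the relation q = ω * p
    have huu : u * starRingEnd ℂ u = 1 := by
      rw [Complex.mul_conj, ← Complex.sq_norm u, huabs]; norm_num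
    have hcu2 : starRingEnd ℂ u * starRingEnd ℂ u = starRingEnd ℂ lam := by
      have h1 := congrArg (starRingEnd ℂ) hu
      rw [map_pow] at h1
      linear_combination h1
    have hlamc : starRingEnd ℂ lam * (-Complex.I * (1 - starRingEnd ℂ ω * starRingEnd ℂ ζ))
        = starRingEnd ℂ ω - ζ := by
      have h1 := congrArg (starRingEnd ℂ) hlam
      simpa only [_root_.map_mul, map_sub, _root_.map_one, Complex.conj_I,
        Complex.conj_conj] using h1
    have hrel : starRingEnd ℂ ζ * starRingEnd ℂ lam + Complex.I
        = ω * starRingEnd ℂ lam + ω * ζ * Complex.I := by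
      linear_combination (-(ω * Complex.I)) * hlamc
        + (-(starRingEnd ℂ lam * starRingEnd ℂ ζ + Complex.I)) * hω2
        + (starRingEnd ℂ ζ * starRingEnd ℂ lam * ω * starRingEnd ℂ ω
            - starRingEnd ℂ lam * ω) * Complex.I_sq
    have hT : starRingEnd ℂ ζ * starRingEnd ℂ u + u * Complex.I
        = ω * (starRingEnd ℂ u + ζ * u * Complex.I) := by
      have hmul : (starRingEnd ℂ ζ * starRingEnd ℂ u + u * Complex.I
          - ω * (starRingEnd ℂ u + ζ * u * Complex.I)) * starRingEnd ℂ u = 0 := by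
        linear_combination (starRingEnd ℂ ζ - ω) * hcu2
          + (Complex.I - ω * ζ * Complex.I) * huu + hrel
      rcases mul_eq_zero.mp hmul with h | h
      · linear_combination h
      · exact absurd h (by simpa using hune)
    have hqp : q = ω * p := by
      rw [hqdef, hpeq, hbdef, hca, hadef]
      have : starRingEnd ℂ ζ * (starRingEnd ℂ u * ((r⁻¹:ℝ):ℂ)) + u * ((r⁻¹:ℝ):ℂ) * Complex.I
          = ((r⁻¹:ℝ):ℂ) * (starRingEnd ℂ ζ * starRingEnd ℂ u + u * Complex.I) := by ring
      rw [this, hT]; ring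
    have hw : (tw g).mulVec ![1, Complex.I] ≠ 0 := by
      rw [hv2]; exact fstNe _ _ hpne
    refine ⟨g, hsu, hz, hw, ?_, ?_⟩
    · rw [mk_congr _ _ hv1 hz, mk_pair a (ζ * a) hane]
      have hvv : ![(1:ℂ), ζ * a / a] = ![1, ζ] := by
        rw [mul_div_assoc, div_self hane, mul_one]
      rw [mk_congr _ _ hvv]
    · rw [mk_congr _ _ hv2 hw, mk_pair p q hpne]
      have hvv : ![(1:ℂ), q / p] = ![1, ω] := by
        rw [hqp, mul_div_assoc, div_self hpne, mul_one]
      rw [mk_congr _ _ hvv]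

end
end

section
/- The set W = {([z₁:z₂],[w₁:w₂]) ∈ ℙ¹ × ℙ¹ : |z₂| < |z₁| and z₁w₁ − z₂w₂ ≠ 0} is invariant under the twisted diagonal action of SU(1,1): for every g ∈ SU(1,1), if ([z],[w]) ∈ W then g·([z],[w]) ∈ W. -/
open Matrix Complex

noncomputable section

lemma tw_eq_s10 (g : M2) (hdet : g.det = 1) :
    tw g = !![g 1 1, g 1 0; g 0 1, g 0 0] := by
  set A := (g.map (starRingEnd ℂ))ᵀ with hA
  have hAdet : A.det = 1 := by
    rw [hA, Matrix.det_transpose]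
    rw [show (g.map (starRingEnd ℂ)).det = (starRingEnd ℂ) g.det from
      (RingHom.map_det (starRingEnd ℂ) g).symm, hdet, _root_.map_one]
  have hAinv : A⁻¹ = A.adjugate := by
    rw [Matrix.inv_def, hAdet, Ring.inverse_one, one_smul]
  rw [tw, sigmaC, ← hA, hAinv]
  ext i j
  fin_cases i <;> fin_cases j <;>
    simp [tw, sigmaC, hAinv, Matrix.adjugate_fin_two, I11, Matrix.mul_apply,
      Fin.sum_univ_two, hA, Matrix.transpose_apply, Matrix.map_apply]

/-- `W` is invariant under the twisted diagonal action of `SU(1,1)`. -/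
theorem W_invariant (g : M2) (hg : SU11 g) (z w : Fin 2 → ℂ) (hz : z ≠ 0) (hw : w ≠ 0)
    (hmem : (Projectivization.mk ℂ z hz, Projectivization.mk ℂ w hw) ∈ W)
    (hz' : g.mulVec z ≠ 0) (hw' : (tw g).mulVec w ≠ 0) :
    (Projectivization.mk ℂ (g.mulVec z) hz',
      Projectivization.mk ℂ ((tw g).mulVec w) hw') ∈ W := by
  -- Transfer the conditions from the witnesses in `hmem` to `z` and `w`.
  obtain ⟨z', w', hz'', hw'', heq, hlt', hne'⟩ := hmem
  have hz0 : Projectivization.mk ℂ z hz = Projectivization.mk ℂ z' hz'' :=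
    congrArg Prod.fst heq
  have hw0 : Projectivization.mk ℂ w hw = Projectivization.mk ℂ w' hw'' :=
    congrArg Prod.snd heq
  obtain ⟨α, hα⟩ := (Projectivization.mk_eq_mk_iff ℂ z z' hz hz'').mp hz0
  obtain ⟨β, hβ⟩ := (Projectivization.mk_eq_mk_iff ℂ w w' hw hw'').mp hw0
  have hzα : ∀ i, z i = (α : ℂ) * z' i := fun i => by
    rw [← hα]; rfl
  have hwβ : ∀ i, w i = (β : ℂ) * w' i := fun i => by
    rw [← hβ]; rfl
  have hlt : ‖z 1‖ < ‖z 0‖ := by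
    rw [hzα 0, hzα 1, norm_mul, norm_mul]
    exact mul_lt_mul_of_pos_left hlt'
      (norm_pos_iff.mpr (Units.ne_zero α))
  have hne : z 0 * w 0 - z 1 * w 1 ≠ 0 := by
    have : z 0 * w 0 - z 1 * w 1 = (α : ℂ) * β * (z' 0 * w' 0 - z' 1 * w' 1) := by
      rw [hzα 0, hzα 1, hwβ 0, hwβ 1]; ring
    rw [this]
    exact mul_ne_zero (mul_ne_zero (Units.ne_zero α) (Units.ne_zero β)) hne'
  -- Extract the SU(1,1) relations.
  have e00 := congrFun (congrFun hg.2 0) 0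
  have e01 := congrFun (congrFun hg.2 0) 1
  have e11 := congrFun (congrFun hg.2 1) 1
  simp [I11, Matrix.mul_apply, Fin.sum_univ_two] at e00 e01 e11
  have e01c := congrArg (starRingEnd ℂ) e01
  simp only [_root_.map_add, map_neg, _root_.map_mul, Complex.conj_conj, map_zero] at e01c
  have hdet2 : g 0 0 * g 1 1 - g 0 1 * g 1 0 = 1 := by
    rw [← Matrix.det_fin_two]; exact hg.1
  have htw := tw_eq_s10 g hg.1
  -- Abbreviations for the transformed vectors.
  have hmulz : ∀ i, g.mulVec z i = g i 0 * z 0 + g i 1 * z 1 := fun i => by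
    simp [Matrix.mulVec, dotProduct, Fin.sum_univ_two]
  have hmulw0 : (tw g).mulVec w 0 = g 1 1 * w 0 + g 1 0 * w 1 := by
    rw [htw]; simp [Matrix.mulVec, dotProduct, Fin.sum_univ_two]
  have hmulw1 : (tw g).mulVec w 1 = g 0 1 * w 0 + g 0 0 * w 1 := by
    rw [htw]; simp [Matrix.mulVec, dotProduct, Fin.sum_univ_two]
  refine ⟨g.mulVec z, (tw g).mulVec w, hz', hw', rfl, ?_, ?_⟩
  · -- disk condition
    have key : g.mulVec z 0 * (starRingEnd ℂ) (g.mulVec z 0)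
        - g.mulVec z 1 * (starRingEnd ℂ) (g.mulVec z 1)
        = z 0 * (starRingEnd ℂ) (z 0) - z 1 * (starRingEnd ℂ) (z 1) := by
      rw [hmulz 0, hmulz 1]
      simp only [_root_.map_add, _root_.map_mul]
      linear_combination (z 0 * (starRingEnd ℂ) (z 0)) * e00 +
        ((starRingEnd ℂ) (z 0) * z 1) * e01 +
        (z 0 * (starRingEnd ℂ) (z 1)) * e01c +
        (z 1 * (starRingEnd ℂ) (z 1)) * e11
    rw [Complex.mul_conj, Complex.mul_conj, Complex.mul_conj, Complex.mul_conj] at key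
    have keyR : Complex.normSq (g.mulVec z 0) - Complex.normSq (g.mulVec z 1)
        = Complex.normSq (z 0) - Complex.normSq (z 1) := by exact_mod_cast key
    have hltsq : Complex.normSq (z 1) < Complex.normSq (z 0) := by
      rw [← Complex.sq_norm, ← Complex.sq_norm]
      exact pow_lt_pow_left₀ hlt (norm_nonneg _) two_ne_zero
    have : Complex.normSq (g.mulVec z 1) < Complex.normSq (g.mulVec z 0) := by
      linarith
    rw [Complex.norm_def, Complex.norm_def]
    exact Real.sqrt_lt_sqrt (Complex.normSq_nonneg _) this
  · -- nonvanishing condition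
    have : g.mulVec z 0 * (tw g).mulVec w 0 - g.mulVec z 1 * (tw g).mulVec w 1
        = (z 0 * w 0 - z 1 * w 1) * (g 0 0 * g 1 1 - g 0 1 * g 1 0) := by
      rw [hmulz 0, hmulz 1, hmulw0, hmulw1]; ring
    rw [this, hdet2, mul_one]
    exact hne

end
end

section
/- For every α with 0 < α ≤ 1 and every β with 0 < β ≤ ∞, the SU(1,1)-invariant domain generated by the slice segments is contained in W: every point g·q, with g ∈ SU(1,1) and q ∈ {z₁} ∪ {ℓ₁(t) : 0 < t < α} ∪ {w₁} ∪ {ℓ₂(s) : 0 < s < β}, lies in W = {([z₁:z₂],[w₁:w₂]) : |z₂| < |z₁| and z₁w₁ − z₂w₂ ≠ 0}. In particular each domain D_β (the case α = 1, β < ∞) is contained in W. -/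
open Matrix Complex

noncomputable section

/-- Homogeneous coordinates of the slice point `z₁ = ([1:0],[1:0])`. -/
def z1v : (Fin 2 → ℂ) × (Fin 2 → ℂ) := (![1, 0], ![1, 0])

/-- Homogeneous coordinates of the slice point `w₁ = ([1:0],[1:i])`. -/
def w1v : (Fin 2 → ℂ) × (Fin 2 → ℂ) := (![1, 0], ![1, Complex.I])

/-- Homogeneous coordinates of the slice point `ℓ₁(t)`. -/
def l1v (t : ℝ) : (Fin 2 → ℂ) × (Fin 2 → ℂ) :=
  (![(Real.cos (Real.pi * (1 - t) / 4) : ℂ),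
      Complex.I * (Real.sin (Real.pi * (1 - t) / 4) : ℂ)],
   ![(Real.cos (Real.pi * (1 - t) / 4) : ℂ),
      Complex.I * (Real.sin (Real.pi * (1 - t) / 4) : ℂ)])

/-- Homogeneous coordinates of the slice point `ℓ₂(s)`. -/
def l2v (s : ℝ) : (Fin 2 → ℂ) × (Fin 2 → ℂ) :=
  (![(Real.exp s : ℂ), Complex.I * (Real.exp (-s) : ℂ)],
   ![(Real.exp (-s) : ℂ), Complex.I * (Real.exp s : ℂ)])


private lemma mulVec_fin2 (a b c d p q : ℂ) :
    (!![a, b; c, d]).mulVec ![p, q] = ![a * p + b * q, c * p + d * q] := by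
  funext i; fin_cases i <;> simp [Matrix.mulVec, dotProduct, Fin.sum_univ_two]

private lemma masterW (a b p q p' q' : ℂ)
    (hab : a * (starRingEnd ℂ) a - b * (starRingEnd ℂ) b = 1)
    (h1 : ‖q‖ < ‖p‖) (h2 : p * p' - q * q' ≠ 0) :
    ‖(starRingEnd ℂ) b * p + (starRingEnd ℂ) a * q‖ < ‖a * p + b * q‖ ∧
    (a * p + b * q) * ((starRingEnd ℂ) a * p' + (starRingEnd ℂ) b * q') -
      ((starRingEnd ℂ) b * p + (starRingEnd ℂ) a * q) * (b * p' + a * q') ≠ 0 := by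
  constructor
  · have hC : ((normSq (a*p+b*q) : ℂ)) - normSq ((starRingEnd ℂ) b * p + (starRingEnd ℂ) a * q)
        = normSq p - normSq q := by
      rw [← Complex.mul_conj, ← Complex.mul_conj, ← Complex.mul_conj, ← Complex.mul_conj]
      simp only [map_add, _root_.map_mul, Complex.conj_conj]
      linear_combination (p * (starRingEnd ℂ) p - q * (starRingEnd ℂ) q) * hab
    have hR : normSq (a*p+b*q) - normSq ((starRingEnd ℂ) b * p + (starRingEnd ℂ) a * q)
        = normSq p - normSq q := by exact_mod_cast hC
    have hqp : normSq q < normSq p := by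
      rw [← Complex.sq_norm, ← Complex.sq_norm]
      exact pow_lt_pow_left₀ h1 (norm_nonneg q) two_ne_zero
    have hlt : normSq ((starRingEnd ℂ) b * p + (starRingEnd ℂ) a * q) < normSq (a*p+b*q) := by
      linarith
    rw [Complex.norm_def, Complex.norm_def]
    exact Real.sqrt_lt_sqrt (normSq_nonneg _) hlt
  · have e : (a * p + b * q) * ((starRingEnd ℂ) a * p' + (starRingEnd ℂ) b * q') -
      ((starRingEnd ℂ) b * p + (starRingEnd ℂ) a * q) * (b * p' + a * q') = p * p' - q * q' := by
      linear_combination (p * p' - q * q') * hab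
    rw [e]; exact h2

private lemma su11_structure (g : M2) (hg : SU11 g) :
    ∃ a b : ℂ, a * (starRingEnd ℂ) a - b * (starRingEnd ℂ) b = 1 ∧
      g = !![a, b; (starRingEnd ℂ) b, (starRingEnd ℂ) a] ∧
      tw g = !![(starRingEnd ℂ) a, (starRingEnd ℂ) b; b, a] := by
  obtain ⟨hdet, hU⟩ := hg
  rw [Matrix.det_fin_two] at hdet
  have e00 := congrFun (congrFun hU 0) 0
  have e01 := congrFun (congrFun hU 0) 1
  have e10 := congrFun (congrFun hU 1) 0
  have e11 := congrFun (congrFun hU 1) 1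
  simp only [Matrix.mul_apply, Fin.sum_univ_two, I11, Matrix.transpose_apply, Matrix.map_apply,
    Matrix.cons_val', Matrix.cons_val_zero, Matrix.cons_val_one, Matrix.head_cons,
    Matrix.empty_val', Matrix.cons_val_fin_one, Matrix.head_fin_const, Matrix.of_apply,
    one_mul, mul_one, neg_mul, mul_neg, zero_mul, mul_zero, add_zero, zero_add]
    at e00 e01 e10 e11
  set a := g 0 0
  set b := g 0 1
  have hc : g 1 0 = (starRingEnd ℂ) b := by
    linear_combination ((starRingEnd ℂ) b) * hdet - g 1 1 * e10 + g 1 0 * e11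
  have hd : g 1 1 = (starRingEnd ℂ) a := by
    linear_combination ((starRingEnd ℂ) a) * hdet - g 1 1 * e00 + g 1 0 * e01
  have key : a * (starRingEnd ℂ) a - b * (starRingEnd ℂ) b = 1 := by
    rw [hc, hd] at hdet; linear_combination hdet
  have hgeq : g = !![a, b; (starRingEnd ℂ) b, (starRingEnd ℂ) a] := by
    rw [Matrix.eta_fin_two g, hc, hd]
  refine ⟨a, b, key, hgeq, ?_⟩
  have hmap : (!![a, b; (starRingEnd ℂ) b, (starRingEnd ℂ) a]).map (starRingEnd ℂ)
      = !![(starRingEnd ℂ) a, (starRingEnd ℂ) b; b, a] := by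
    ext i j; fin_cases i <;> fin_cases j <;> simp [Matrix.map_apply]
  have htr : (!![(starRingEnd ℂ) a, (starRingEnd ℂ) b; b, a])ᵀ
      = !![(starRingEnd ℂ) a, b; (starRingEnd ℂ) b, a] := by
    ext i j; fin_cases i <;> fin_cases j <;> simp
  have hinv : (!![(starRingEnd ℂ) a, b; (starRingEnd ℂ) b, a])⁻¹
      = !![a, -b; -(starRingEnd ℂ) b, (starRingEnd ℂ) a] := by
    apply Matrix.inv_eq_right_inv
    rw [Matrix.mul_fin_two, Matrix.one_fin_two]
    ext i j
    fin_cases i <;> fin_cases j <;> simp <;>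
      first | linear_combination key | linear_combination (0:ℂ) * key
  rw [hgeq]
  unfold tw sigmaC
  rw [hmap, htr, hinv, I11]
  rw [Matrix.mul_fin_two, Matrix.mul_fin_two]
  ext i j; fin_cases i <;> fin_cases j <;> simp [Matrix.map_apply]

/-- For `0 < α ≤ 1` and `0 < β ≤ ∞`, the `SU(1,1)`-invariant domain generated by the
slice segments `{z₁} ∪ ℓ₁((0,α)) ∪ {w₁} ∪ ℓ₂((0,β))` is contained in `W`.
In particular each domain `D_β` (the case `α = 1`, `β < ∞`) is contained in `W`. -/
theorem invariant_domain_subset_W (α : ℝ) (hα0 : 0 < α) (hα1 : α ≤ 1)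
    (β : ENNReal) (hβ : 0 < β) (g : M2) (hg : SU11 g)
    (q : (Fin 2 → ℂ) × (Fin 2 → ℂ))
    (hq : q = z1v ∨ (∃ t : ℝ, 0 < t ∧ t < α ∧ q = l1v t) ∨ q = w1v ∨
      (∃ s : ℝ, 0 < s ∧ ENNReal.ofReal s < β ∧ q = l2v s))
    (hz : g.mulVec q.1 ≠ 0) (hw : (tw g).mulVec q.2 ≠ 0) :
    (Projectivization.mk ℂ (g.mulVec q.1) hz,
      Projectivization.mk ℂ ((tw g).mulVec q.2) hw) ∈ W := by
  obtain ⟨a, b, key, hgeq, htw⟩ := su11_structure g hg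
  refine ⟨g.mulVec q.1, (tw g).mulVec q.2, hz, hw, rfl, ?_⟩
  have hfacts : ‖q.1 1‖ < ‖q.1 0‖ ∧ q.1 0 * q.2 0 - q.1 1 * q.2 1 ≠ 0 := by
    rcases hq with h | ⟨t, ht0, htα, h⟩ | h | ⟨s, hs0, hsβ, h⟩
    · subst h; simp [z1v]
    · subst h
      set θ := Real.pi * (1 - t) / 4 with hθ
      have hπ := Real.pi_pos
      have hθ0 : 0 < θ := by
        have : 0 < 1 - t := by linarith
        positivity
      have hθlt : θ < Real.pi / 4 := by
        rw [hθ]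
        rw [div_lt_div_iff₀ (by norm_num) (by norm_num)]
        nlinarith
      have hs : 0 < Real.sin θ := Real.sin_pos_of_pos_of_lt_pi hθ0 (by linarith)
      have hsc : Real.sin θ < Real.cos θ := by
        have h1 : Real.sin θ < Real.sin (Real.pi / 4) := by
          apply Real.strictMonoOn_sin ⟨by linarith, by linarith⟩ ⟨by linarith, by linarith⟩ hθlt
        have h2 : Real.cos (Real.pi / 4) < Real.cos θ := by
          apply Real.strictAntiOn_cos ⟨by linarith, by linarith⟩ ⟨by linarith, by linarith⟩ hθlt
        rw [Real.sin_pi_div_four] at h1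
        rw [Real.cos_pi_div_four] at h2
        linarith
      have hcpos : 0 < Real.cos θ := lt_trans hs hsc
      constructor
      · simp only [l1v, Matrix.cons_val_one, Matrix.head_cons, Matrix.cons_val_zero]
        rw [norm_mul, Complex.norm_I, one_mul, Complex.norm_real, Complex.norm_real,
          Real.norm_eq_abs, Real.norm_eq_abs, abs_of_pos hs, abs_of_pos hcpos]
        exact hsc
      · simp only [l1v, Matrix.cons_val_one, Matrix.head_cons, Matrix.cons_val_zero]
        have e : ((Real.cos θ : ℂ)) * (Real.cos θ : ℂ) -
            (Complex.I * (Real.sin θ : ℂ)) * (Complex.I * (Real.sin θ : ℂ))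
            = (((Real.sin θ)^2 + (Real.cos θ)^2 : ℝ) : ℂ) := by
          rw [Complex.ofReal_add, Complex.ofReal_pow, Complex.ofReal_pow]
          linear_combination (-(Real.sin θ : ℂ)^2) * Complex.I_mul_I
        rw [e, Real.sin_sq_add_cos_sq]
        simp
    · subst h; simp [w1v]
    · subst h
      constructor
      · simp only [l2v, Matrix.cons_val_one, Matrix.head_cons, Matrix.cons_val_zero]
        rw [norm_mul, Complex.norm_I, one_mul, Complex.norm_real, Complex.norm_real,
          Real.norm_eq_abs, Real.norm_eq_abs, abs_of_pos (Real.exp_pos _), abs_of_pos (Real.exp_pos _)]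
        exact Real.exp_lt_exp.mpr (by linarith)
      · simp only [l2v, Matrix.cons_val_one, Matrix.head_cons, Matrix.cons_val_zero]
        have hC : (Real.exp s : ℂ) * (Real.exp (-s) : ℂ) = 1 := by
          rw [← Complex.ofReal_mul, ← Real.exp_add]
          simp
        have e : ((Real.exp s : ℂ)) * (Real.exp (-s) : ℂ) -
            (Complex.I * (Real.exp (-s) : ℂ)) * (Complex.I * (Real.exp s : ℂ)) = 2 := by
          linear_combination (-(Real.exp (-s) : ℂ) * (Real.exp s : ℂ)) * Complex.I_mul_I + 2 * hC
        rw [e]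
        norm_num
  obtain ⟨h1, h2⟩ := hfacts
  have hv1 : g.mulVec q.1 = ![a * q.1 0 + b * q.1 1,
      (starRingEnd ℂ) b * q.1 0 + (starRingEnd ℂ) a * q.1 1] := by
    rw [hgeq]
    have : q.1 = ![q.1 0, q.1 1] := by
      funext i; fin_cases i <;> rfl
    rw [this, mulVec_fin2]; simp
  have hv2 : (tw g).mulVec q.2 = ![(starRingEnd ℂ) a * q.2 0 + (starRingEnd ℂ) b * q.2 1,
      b * q.2 0 + a * q.2 1] := by
    rw [htw]
    have : q.2 = ![q.2 0, q.2 1] := by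
      funext i; fin_cases i <;> rfl
    rw [this, mulVec_fin2]; simp
  obtain ⟨m1, m2⟩ := masterW a b (q.1 0) (q.1 1) (q.2 0) (q.2 1) key h1 h2
  constructor
  · rw [hv1]
    simpa using m1
  · rw [hv1, hv2]
    simpa using m2

end
end

section
/- The map Φ : Δ × ℂ → ℙ¹ × ℙ¹ defined by Φ(u,v) = ([1:u], [1 + uv : v]) is well defined (the vector (1+uv, v) is never zero) and is a bijection from Δ × ℂ onto W = {([z₁:z₂],[w₁:w₂]) ∈ ℙ¹ × ℙ¹ : |z₂| < |z₁| and z₁w₁ − z₂w₂ ≠ 0}. In particular W is biholomorphic to Δ × ℂ, hence not hyperbolic. -/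
open Matrix Complex

noncomputable section

/-- The vector `(1 + uv, v)` is never zero, so `Φ` is well defined. -/
lemma phiNe (u v : ℂ) : ![1 + u * v, v] ≠ 0 := by
  intro h
  have h0 : 1 + u * v = 0 := by simpa using congrFun h 0
  have h1 : v = 0 := by simpa using congrFun h 1
  rw [h1, mul_zero, add_zero] at h0
  exact one_ne_zero h0

/-- The map `Φ(u,v) = ([1:u], [1+uv : v])`. -/
def Phi (u v : ℂ) : P1 × P1 :=
  (Projectivization.mk ℂ ![1, u] (oneNe u),
   Projectivization.mk ℂ ![1 + u * v, v] (phiNe u v))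

/-- `Φ(u,v) = ([1:u],[1+uv:v])` is a bijection from `Δ × ℂ` onto `W`. -/
theorem Phi_bijOn :
    Set.BijOn (fun p : ℂ × ℂ => Phi p.1 p.2) {p : ℂ × ℂ | ‖p.1‖ < 1} W := by
  refine ⟨?_, ?_, ?_⟩
  · rintro ⟨u, v⟩ hu
    refine ⟨![1, u], ![1 + u * v, v], oneNe u, phiNe u v, rfl, by simpa using hu, ?_⟩
    simp only [Matrix.cons_val_zero, Matrix.cons_val_one, Matrix.head_cons]
    intro h
    apply one_ne_zero (α := ℂ)
    linear_combination h
  · rintro ⟨u, v⟩ _ ⟨u', v'⟩ _ h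
    simp only [Phi, Prod.mk.injEq] at h
    obtain ⟨h1, h2⟩ := h
    rw [Projectivization.mk_eq_mk_iff] at h1 h2
    obtain ⟨a, ha⟩ := h1
    have ha0 : (a : ℂ) * 1 = 1 := by simpa [Units.smul_def] using congrFun ha 0
    have ha1 : (a : ℂ) * u' = u := by simpa [Units.smul_def] using congrFun ha 1
    have huu : u = u' := by
      rw [← ha1]
      have : (a : ℂ) = 1 := by simpa using ha0
      rw [this, one_mul]
    obtain ⟨b, hb⟩ := h2
    have hb0 : (b : ℂ) * (1 + u' * v') = 1 + u * v := by
      simpa [Units.smul_def, mul_add] using congrFun hb 0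
    have hb1 : (b : ℂ) * v' = v := by simpa [Units.smul_def] using congrFun hb 1
    have hB : (b : ℂ) = 1 := by linear_combination hb0 - u' * hb1 + v * huu
    have hvv : v = v' := by rw [← hb1, hB, one_mul]
    simp [huu, hvv]
  · rintro ⟨z1p, w1p⟩ ⟨z, w, hz, hw, hp, habs, hne⟩
    have hz0 : z 0 ≠ 0 := by
      intro h
      rw [h] at habs
      exact (norm_nonneg _).not_gt (by simpa using habs)
    set u : ℂ := z 1 / z 0 with hu
    have hd : w 0 - u * w 1 ≠ 0 := by
      intro h
      apply hne
      have h2 : z 0 * (w 0 - u * w 1) = z 0 * w 0 - z 1 * w 1 := by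
        field_simp [hu]
        rw [hu]
        field_simp
      rw [h, mul_zero] at h2
      exact h2.symm
    set d : ℂ := w 0 - u * w 1 with hdd
    set v : ℂ := w 1 / d with hv
    refine ⟨(u, v), ?_, ?_⟩
    · simp only [Set.mem_setOf_eq]
      rw [hu, norm_div, div_lt_one (norm_pos_iff.mpr hz0)]
      exact habs
    · rw [hp]
      simp only [Phi, Prod.mk.injEq]
      constructor
      · rw [Projectivization.mk_eq_mk_iff]
        refine ⟨Units.mk0 ((z 0)⁻¹) (inv_ne_zero hz0), ?_⟩
        funext i
        fin_cases i
        · simp [Units.smul_def, inv_mul_cancel₀ hz0]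
        · simp only [Units.smul_def, Units.val_mk0, Pi.smul_apply, smul_eq_mul,
            Fin.mk_one, Matrix.cons_val_one, Matrix.head_cons, Matrix.cons_val_zero, hu]
          field_simp
      · rw [Projectivization.mk_eq_mk_iff]
        refine ⟨Units.mk0 (d⁻¹) (inv_ne_zero hd), ?_⟩
        funext i
        fin_cases i
        · simp only [Units.smul_def, Units.val_mk0, Pi.smul_apply, smul_eq_mul,
            Fin.zero_eta, Matrix.cons_val_zero, hv]
          rw [hdd] at hd ⊢
          field_simp
          ring
        · simp [Units.smul_def, hv, div_eq_inv_mul]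
end
end

section
/- The point z₂ = ([1:i],[1:i]) lies in the open SL(2,ℂ)-orbit but not in W: writing z₂ with homogeneous coordinates z = (1,i), w = (1,i), one has z₁w₁ − z₂w₂ = 2 ≠ 0, while the condition |z₂| < |z₁| fails (|i| = |1|); moreover z₂ lies in the closure of W in ℙ¹ × ℙ¹, since z₂ is the limit as s → 0⁺ of the points ℓ₂(s) = ([eˢ : i e⁻ˢ], [e⁻ˢ : i eˢ]), all of which belong to W. -/
open Matrix Complex

noncomputable section

/-- The quotient topology on the projective line. -/
instance : TopologicalSpace P1 :=
  inferInstanceAs (TopologicalSpace (Quotient (projectivizationSetoid ℂ (Fin 2 → ℂ))))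

/-- The point `z₂ = ([1:i],[1:i]) ∈ ℙ¹ × ℙ¹`. -/
def z2pt : P1 × P1 :=
  (Projectivization.mk ℂ ![1, Complex.I] (oneNe Complex.I),
   Projectivization.mk ℂ ![1, Complex.I] (oneNe Complex.I))

/-- The point `ℓ₂(s) = ([eˢ : i e⁻ˢ], [e⁻ˢ : i eˢ]) ∈ ℙ¹ × ℙ¹`. -/
def l2pt (s : ℝ) : P1 × P1 :=
  (Projectivization.mk ℂ ![(Real.exp s : ℂ), Complex.I * (Real.exp (-s) : ℂ)]
    (fstNe _ _ (by exact_mod_cast Real.exp_ne_zero s)),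
   Projectivization.mk ℂ ![(Real.exp (-s) : ℂ), Complex.I * (Real.exp s : ℂ)]
    (fstNe _ _ (by exact_mod_cast Real.exp_ne_zero (-s))))

lemma z2_not_in_W : z2pt ∉ W := by
  rintro ⟨z, w, hz, hw, hp, hlt, -⟩
  have h1 : Projectivization.mk ℂ ![1, Complex.I] (oneNe Complex.I)
      = Projectivization.mk ℂ z hz := congrArg Prod.fst hp
  rw [Projectivization.mk_eq_mk_iff] at h1
  obtain ⟨a, ha⟩ := h1
  have h0 : (a : ℂ) * z 0 = 1 := by simpa [Units.smul_def] using congrFun ha 0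
  have h1' : (a : ℂ) * z 1 = Complex.I := by simpa [Units.smul_def] using congrFun ha 1
  have ha0 : ‖(a : ℂ)‖ * ‖z 0‖ = 1 := by
    rw [← norm_mul, h0, norm_one]
  have ha1 : ‖(a : ℂ)‖ * ‖z 1‖ = 1 := by
    rw [← norm_mul, h1', Complex.norm_I]
  have hane : ‖(a : ℂ)‖ ≠ 0 := by
    intro h; rw [h, zero_mul] at ha0; exact zero_ne_one ha0
  have : ‖z 0‖ = ‖z 1‖ :=
    mul_left_cancel₀ hane (ha0.trans ha1.symm)
  rw [this] at hlt
  exact lt_irrefl _ hlt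

lemma vec_cont (f g : ℝ → ℂ) (hf : Continuous f) (hg : Continuous g) :
    Continuous (fun s => ![f s, g s]) := by
  refine continuous_pi fun i => ?_
  fin_cases i <;> simpa

lemma l2_mem_W (s : ℝ) (hs : 0 < s) : l2pt s ∈ W := by
  refine ⟨_, _, _, _, rfl, ?_, ?_⟩
  · simp only [Matrix.cons_val_one, Matrix.head_cons, Matrix.cons_val_zero, norm_mul,
      Complex.norm_I, one_mul, Complex.norm_real, Real.norm_eq_abs, abs_of_pos (Real.exp_pos _)]
    exact Real.exp_lt_exp.2 (by linarith)
  · simp only [Matrix.cons_val_zero, Matrix.cons_val_one, Matrix.head_cons]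
    have he : (Real.exp s : ℂ) * (Real.exp (-s) : ℂ) = 1 := by
      rw [← Complex.ofReal_mul, ← Real.exp_add]; simp
    have key : (Real.exp s : ℂ) * (Real.exp (-s) : ℂ) -
        Complex.I * (Real.exp (-s) : ℂ) * (Complex.I * (Real.exp s : ℂ)) = 2 := by
      have h2 : Complex.I * (Real.exp (-s) : ℂ) * (Complex.I * (Real.exp s : ℂ))
          = Complex.I * Complex.I * ((Real.exp s : ℂ) * (Real.exp (-s) : ℂ)) := by ring
      rw [h2, Complex.I_mul_I, he]; ring
    rw [key]
    exact two_ne_zero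

lemma tendsto_l2 : Filter.Tendsto l2pt (nhdsWithin 0 (Set.Ioi 0)) (nhds z2pt) := by
  have hq : Continuous (Quotient.mk'' : {v : Fin 2 → ℂ // v ≠ 0} → P1) :=
    continuous_quotient_mk'
  have hc1 : Continuous (fun s : ℝ => ![(Real.exp s : ℂ), Complex.I * (Real.exp (-s) : ℂ)]) :=
    vec_cont _ _ (by fun_prop) (by fun_prop)
  have hc2 : Continuous (fun s : ℝ => ![(Real.exp (-s) : ℂ), Complex.I * (Real.exp s : ℂ)]) :=
    vec_cont _ _ (by fun_prop) (by fun_prop)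
  have hF : Continuous (fun s : ℝ => (⟨![(Real.exp s : ℂ), Complex.I * (Real.exp (-s) : ℂ)],
      fstNe _ _ (by exact_mod_cast Real.exp_ne_zero s)⟩ : {v : Fin 2 → ℂ // v ≠ 0})) :=
    hc1.subtype_mk _
  have hG : Continuous (fun s : ℝ => (⟨![(Real.exp (-s) : ℂ), Complex.I * (Real.exp s : ℂ)],
      fstNe _ _ (by exact_mod_cast Real.exp_ne_zero (-s))⟩ : {v : Fin 2 → ℂ // v ≠ 0})) :=
    hc2.subtype_mk _
  have hl : Continuous l2pt := by
    have : l2pt = fun s => (Quotient.mk'' (⟨![(Real.exp s : ℂ),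
        Complex.I * (Real.exp (-s) : ℂ)], fstNe _ _ (by exact_mod_cast Real.exp_ne_zero s)⟩
          : {v : Fin 2 → ℂ // v ≠ 0}),
        Quotient.mk'' (⟨![(Real.exp (-s) : ℂ), Complex.I * (Real.exp s : ℂ)],
          fstNe _ _ (by exact_mod_cast Real.exp_ne_zero (-s))⟩ : {v : Fin 2 → ℂ // v ≠ 0})) :=
      rfl
    rw [this]
    exact ((hq.comp hF).prodMk (hq.comp hG))
  have h0 : l2pt 0 = z2pt := by
    have e1 : ∀ (v w : Fin 2 → ℂ) (hv : v ≠ 0) (hw : w ≠ 0), v = w →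
        Projectivization.mk ℂ v hv = Projectivization.mk ℂ w hw := by
      rintro v w hv hw rfl; rfl
    unfold l2pt z2pt
    refine Prod.ext ?_ ?_ <;>
    · refine e1 _ _ _ _ ?_
      funext i; fin_cases i <;> simp
  have := hl.tendsto 0
  rw [h0] at this
  exact this.mono_left nhdsWithin_le_nhds

/-- The point `z₂ = ([1:i],[1:i])` lies in the open `SL(2,ℂ)`-orbit
(`z₁w₁ - z₂w₂ = 2 ≠ 0`) but not in `W` (`|i| < |1|` fails); nevertheless it lies in the
closure of `W`: it is the limit as `s → 0⁺` of the points `ℓ₂(s)`, all of which lie in `W`. -/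
theorem z2_in_closure_W_not_in_W :
    ((1 : ℂ) * 1 - Complex.I * Complex.I = 2 ∧ (2 : ℂ) ≠ 0) ∧
    ¬ ‖Complex.I‖ < ‖(1 : ℂ)‖ ∧
    z2pt ∉ W ∧
    (∀ s : ℝ, 0 < s → l2pt s ∈ W) ∧
    Filter.Tendsto l2pt (nhdsWithin 0 (Set.Ioi 0)) (nhds z2pt) ∧
    z2pt ∈ closure W := by
  refine ⟨⟨by rw [Complex.I_mul_I]; ring, two_ne_zero⟩,
    by simp, z2_not_in_W, l2_mem_W, tendsto_l2, ?_⟩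
  exact mem_closure_of_tendsto tendsto_l2
    (Filter.eventually_of_mem self_mem_nhdsWithin fun s hs => l2_mem_W s hs)

end
end
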